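/- The modular automorphisms scale the modular element by the inverse of the scaling constant: σ(δ) = ν⁻¹·δ and σ'(δ) = ν⁻¹·δ. -/

import Mathlib

open TensorProduct HopfAlgebra

section Aux

variable {R : Type*} {A : Type*} [CommSemiring R] [Semiring A] [HopfAlgebra R A]

open Coalgebra

/-- Convolution product on linear endomorphisms of a bialgebra. -/
noncomputable def myconv (f g : A →ₗ[R] A) : A →ₗ[R] A :=
  LinearMap.mul' R A ∘ₗ TensorProduct.map f g ∘ₗ Coalgebra.comul

lemma myconv_apply {ι : Type*} (f g : A →ₗ[R] A) (a : A) (r : Coalgebra.Repr R a ι) :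
    myconv f g a = ∑ i ∈ r.index, f (r.left i) * g (r.right i) := by
  simp only [myconv, LinearMap.comp_apply, ← r.eq, map_sum, TensorProduct.map_tmul,
    LinearMap.mul'_apply]

/-- The convolution unit. -/
noncomputable def myconvOne : A →ₗ[R] A :=
  Algebra.linearMap R A ∘ₗ Coalgebra.counit

lemma myconvOne_apply (a : A) :
    myconvOne (R := R) a = algebraMap R A (counit (R := R) a) := rfl

lemma myconv_one_right (f : A →ₗ[R] A) : myconv f myconvOne = f := by
  ext a
  have key := congrArg (TensorProduct.rid R A)
    (sum_map_tmul_counit_eq (R := R) (f := f) (a := a) (repr := ℛ R a))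
  simp only [map_sum, TensorProduct.rid_tmul, one_smul] at key
  rw [myconv_apply f myconvOne a (ℛ R a)]
  calc ∑ i ∈ (ℛ R a).index, f ((ℛ R a).left i) * myconvOne ((ℛ R a).right i)
      = ∑ i ∈ (ℛ R a).index, counit (R := R) ((ℛ R a).right i) • f ((ℛ R a).left i) := by
        refine Finset.sum_congr rfl fun i _ => ?_
        rw [myconvOne_apply, Algebra.smul_def, ← Algebra.commutes]
    _ = f a := key

lemma myconv_one_left (f : A →ₗ[R] A) : myconv myconvOne f = f := by
  ext a
  have key := congrArg (TensorProduct.lid R A)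
    (sum_counit_tmul_map_eq (R := R) (f := f) (a := a) (repr := ℛ R a))
  simp only [map_sum, TensorProduct.lid_tmul, one_smul] at key
  rw [myconv_apply myconvOne f a (ℛ R a)]
  calc ∑ i ∈ (ℛ R a).index, myconvOne ((ℛ R a).left i) * f ((ℛ R a).right i)
      = ∑ i ∈ (ℛ R a).index, counit (R := R) ((ℛ R a).left i) • f ((ℛ R a).right i) := by
        refine Finset.sum_congr rfl fun i _ => ?_
        rw [myconvOne_apply, Algebra.smul_def]
    _ = f a := key

lemma myconv_assoc (f g h : A →ₗ[R] A) :
    myconv (myconv f g) h = myconv f (myconv g h) := by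
  ext a
  set r := ℛ R a with hr
  have key := congrArg
    (LinearMap.mul' R A ∘ₗ LinearMap.lTensor A (LinearMap.mul' R A)
      ∘ₗ TensorProduct.map f (TensorProduct.map g h))
    (sum_tmul_tmul_eq (R := R) r (fun i => ℛ R (r.left i)) (fun i => ℛ R (r.right i)))
  simp only [map_sum, LinearMap.comp_apply, TensorProduct.map_tmul,
    LinearMap.lTensor_tmul, LinearMap.mul'_apply] at key
  rw [myconv_apply (myconv f g) h a r, myconv_apply f (myconv g h) a r]
  calc ∑ i ∈ r.index, myconv f g (r.left i) * h (r.right i)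
      = ∑ i ∈ r.index, ∑ j ∈ (ℛ R (r.left i)).index,
          f ((ℛ R (r.left i)).left j) * (g ((ℛ R (r.left i)).right j) * h (r.right i)) := by
        refine Finset.sum_congr rfl fun i _ => ?_
        rw [myconv_apply f g (r.left i) (ℛ R (r.left i)), Finset.sum_mul]
        exact Finset.sum_congr rfl fun j _ => mul_assoc _ _ _
    _ = ∑ i ∈ r.index, ∑ j ∈ (ℛ R (r.right i)).index,
          f (r.left i) * (g ((ℛ R (r.right i)).left j) * h ((ℛ R (r.right i)).right j)) := key
    _ = ∑ i ∈ r.index, f (r.left i) * myconv g h (r.right i) := by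
        refine Finset.sum_congr rfl fun i _ => ?_
        rw [myconv_apply g h (r.right i) (ℛ R (r.right i)), Finset.mul_sum]

/-- Anti-multiplicativity of the antipode with respect to a group-like unit:
`S(a g) = g⁻¹ S(a)`. -/
lemma antipode_mul_grouplike (g : Aˣ)
    (hg : comul (R := R) ((g : A)) = (g : A) ⊗ₜ[R] (g : A))
    (hge : counit (R := R) ((g : A)) = 1) (a : A) :
    antipode (R := R) (a * g) = (↑g⁻¹ : A) * antipode (R := R) a := by
  set u : A →ₗ[R] A := antipode (R := R) ∘ₗ LinearMap.mulRight R ((g : A)) with hu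
  set v : A →ₗ[R] A := LinearMap.mulRight R ((g : A)) with hv
  set w : A →ₗ[R] A := LinearMap.mulLeft R ((↑g⁻¹ : A)) ∘ₗ antipode (R := R) with hw
  have huv : myconv u v = myconvOne := by
    ext b
    set r := ℛ R b with hr
    let rg : Coalgebra.Repr R (b * (g : A)) (A × A) :=
      { index := r.index
        left := fun i => r.left i * g
        right := fun i => r.right i * g
        eq := by
          rw [Bialgebra.comul_mul, hg, ← r.eq, Finset.sum_mul]
          exact Finset.sum_congr rfl fun i _ =>
            (Algebra.TensorProduct.tmul_mul_tmul _ _ _ _).symm }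
    have hs := sum_antipode_mul_eq_algebraMap_counit (R := R) rg
    rw [myconv_apply u v b r, myconvOne_apply]
    calc ∑ i ∈ r.index, u (r.left i) * v (r.right i)
        = ∑ i ∈ rg.index, antipode (R := R) (rg.left i) * rg.right i := rfl
      _ = algebraMap R A (counit (R := R) (b * (g : A))) := hs
      _ = algebraMap R A (counit (R := R) b) := by
          rw [Bialgebra.counit_mul, hge, mul_one]
  have hvw : myconv v w = myconvOne := by
    ext b
    set r := ℛ R b with hr
    have hs := sum_mul_antipode_eq_algebraMap_counit (R := R) r
    rw [myconv_apply v w b r, myconvOne_apply]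
    calc ∑ i ∈ r.index, v (r.left i) * w (r.right i)
        = ∑ i ∈ r.index, r.left i * antipode (R := R) (r.right i) := by
          refine Finset.sum_congr rfl fun i _ => ?_
          show (r.left i * g) * ((↑g⁻¹ : A) * antipode (R := R) (r.right i)) = _
          rw [mul_assoc, ← mul_assoc ((g : A)), Units.mul_inv, one_mul]
      _ = algebraMap R A (counit (R := R) b) := hs
  have huw : u = w := by
    calc u = myconv u myconvOne := (myconv_one_right u).symm
      _ = myconv u (myconv v w) := by rw [hvw]
      _ = myconv (myconv u v) w := (myconv_assoc u v w).symm
      _ = myconv myconvOne w := by rw [huv]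
      _ = w := myconv_one_left w
  exact LinearMap.congr_fun huw a

end Aux

/-- The modular automorphisms scale the modular element by the inverse of the scaling
constant: `σ(δ) = ν⁻¹ δ` and `σ'(δ) = ν⁻¹ δ`. -/
theorem modular_automorphism_modular_element
    {A : Type*} [Ring A] [HopfAlgebra ℂ A]
    (hS : Function.Bijective (antipode (R := ℂ) (A := A)))
    (φ : A →ₗ[ℂ] ℂ) (hφ0 : φ ≠ 0)
    (hφL : ∀ a : A,
      (TensorProduct.rid ℂ A) (LinearMap.lTensor A φ (Coalgebra.comul a)) = φ a • (1 : A))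
    (hφf1 : ∀ a : A, (∀ b : A, φ (a * b) = 0) → a = 0)
    (hφf2 : ∀ a : A, (∀ b : A, φ (b * a) = 0) → a = 0)
    (σ : A ≃ₐ[ℂ] A) (hσ : ∀ a b : A, φ (a * b) = φ (b * σ a))
    (hψR : ∀ a : A,
      (TensorProduct.lid ℂ A) (LinearMap.rTensor A (φ ∘ₗ antipode (R := ℂ))
        (Coalgebra.comul a)) = φ (antipode (R := ℂ) a) • (1 : A))
    (σ' : A ≃ₐ[ℂ] A)
    (hσ' : ∀ a b : A, φ (antipode (R := ℂ) (a * b)) = φ (antipode (R := ℂ) (b * σ' a)))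
    (δ : Aˣ)
    (hδΔ : Coalgebra.comul (R := ℂ) ((δ : A)) = (δ : A) ⊗ₜ[ℂ] (δ : A))
    (hδε : Coalgebra.counit (R := ℂ) ((δ : A)) = 1)
    (hδ : ∀ a : A, φ (antipode (R := ℂ) a) = φ (a * δ))
    (ν : ℂ) (hν0 : ν ≠ 0)
    (hν : ∀ a : A, φ (antipode (R := ℂ) (antipode (R := ℂ) a)) = ν * φ a) :
    σ (δ : A) = ν⁻¹ • (δ : A) ∧ σ' (δ : A) = ν⁻¹ • (δ : A) := by
  -- δ⁻¹ is group-like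
  have hcomul_inv : Coalgebra.comul (R := ℂ) ((↑δ⁻¹ : A)) = (↑δ⁻¹ : A) ⊗ₜ[ℂ] (↑δ⁻¹ : A) := by
    calc Coalgebra.comul (R := ℂ) ((↑δ⁻¹ : A))
        = Coalgebra.comul (R := ℂ) ((↑δ⁻¹ : A)) *
            (((δ : A) ⊗ₜ[ℂ] (δ : A)) * ((↑δ⁻¹ : A) ⊗ₜ[ℂ] (↑δ⁻¹ : A))) := by
          rw [Algebra.TensorProduct.tmul_mul_tmul, Units.mul_inv,
            ← Algebra.TensorProduct.one_def, mul_one]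
      _ = Coalgebra.comul (R := ℂ) ((↑δ⁻¹ : A) * (δ : A)) * ((↑δ⁻¹ : A) ⊗ₜ[ℂ] (↑δ⁻¹ : A)) := by
          rw [Bialgebra.comul_mul, hδΔ, mul_assoc]
      _ = (↑δ⁻¹ : A) ⊗ₜ[ℂ] (↑δ⁻¹ : A) := by
          rw [Units.inv_mul, Bialgebra.comul_one, one_mul]
  have hcounit_inv : Coalgebra.counit (R := ℂ) ((↑δ⁻¹ : A)) = 1 := by
    have h := Bialgebra.counit_mul (R := ℂ) ((↑δ⁻¹ : A)) ((δ : A))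
    rw [Units.inv_mul, Bialgebra.counit_one, hδε, mul_one] at h
    exact h.symm
  have hSδ : ∀ a : A, antipode (R := ℂ) (a * (δ : A)) = (↑δ⁻¹ : A) * antipode (R := ℂ) a :=
    antipode_mul_grouplike δ hδΔ hδε
  have hSδi : ∀ a : A, antipode (R := ℂ) (a * (↑δ⁻¹ : A)) = (δ : A) * antipode (R := ℂ) a := by
    intro a
    have h := antipode_mul_grouplike δ⁻¹ hcomul_inv hcounit_inv a
    rwa [inv_inv] at h
  -- φ(δ ⬝ S c) = φ(c)
  have keyA : ∀ c : A, φ ((δ : A) * antipode (R := ℂ) c) = φ c := by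
    intro c
    rw [← hSδi c, hδ, mul_assoc, Units.inv_mul, mul_one]
  -- φ(S c ⬝ δ) = ν φ(c)
  have keyB : ∀ c : A, φ (antipode (R := ℂ) c * (δ : A)) = ν * φ c := by
    intro c
    rw [← hδ (antipode (R := ℂ) c), hν]
  -- φ(δ b) = ν⁻¹ φ(b δ)
  have key1 : ∀ b : A, φ ((δ : A) * b) = ν⁻¹ * φ (b * (δ : A)) := by
    intro b
    obtain ⟨c, rfl⟩ := hS.2 b
    rw [keyA, keyB, ← mul_assoc, inv_mul_cancel₀ hν0, one_mul]
  constructor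
  · -- σ δ = ν⁻¹ δ
    have h := hφf2 (σ (δ : A) - ν⁻¹ • (δ : A)) (fun b => by
      rw [mul_sub, map_sub, mul_smul_comm, map_smul, smul_eq_mul, ← hσ, key1, sub_self])
    linear_combination (norm := module) h
  · -- σ' δ = ν⁻¹ δ
    have h2 : σ' (δ : A) * (δ : A) = ν⁻¹ • ((δ : A) * (δ : A)) := by
      have h := hφf2 (σ' (δ : A) * (δ : A) - ν⁻¹ • ((δ : A) * (δ : A))) (fun b => by
        have e1 : φ (b * (σ' (δ : A) * (δ : A))) = ν⁻¹ * φ (b * ((δ : A) * (δ : A))) := by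
          calc φ (b * (σ' (δ : A) * (δ : A)))
              = φ ((b * σ' (δ : A)) * (δ : A)) := by rw [mul_assoc]
            _ = φ (antipode (R := ℂ) (b * σ' (δ : A))) := (hδ _).symm
            _ = φ (antipode (R := ℂ) ((δ : A) * b)) := (hσ' (δ : A) b).symm
            _ = φ (((δ : A) * b) * (δ : A)) := hδ _
            _ = φ ((δ : A) * (b * (δ : A))) := by rw [mul_assoc]
            _ = ν⁻¹ * φ ((b * (δ : A)) * (δ : A)) := key1 _
            _ = ν⁻¹ * φ (b * ((δ : A) * (δ : A))) := by rw [mul_assoc]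
        rw [mul_sub, map_sub, mul_smul_comm, map_smul, smul_eq_mul, e1, sub_self])
      linear_combination (norm := module) h
    have h3 : σ' (δ : A) = (σ' (δ : A) * (δ : A)) * (↑δ⁻¹ : A) := by
      rw [mul_assoc, Units.mul_inv, mul_one]
    rw [h2, smul_mul_assoc, mul_assoc, Units.mul_inv, mul_one] at h3
    exact h3
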